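/- arXiv:1710.09951 — 2 statements merged into one kernel-verified Lean document; each statement's English description precedes it below -/
import Mathlib

section
/- (Approximate Strassen theorem, finite case.) Let μ₁, μ₂ be sub-distributions with finite support over A₁, A₂ and R ⊆ A₁ × A₂. If μ₁(S₁) ≤ e^ε · μ₂(R(S₁)) + δ for every S₁ ⊆ A₁, then there exists an (ε,δ)-approximate lifting of R relating μ₁ and μ₂. -/
open scoped ENNReal
open scoped NNReal Classical

noncomputable section

/-- A discrete sub-distribution: total mass at most 1. -/
def IsSubDist {A : Type*} (μ : A → ℝ≥0∞) : Prop := ∑' a, μ a ≤ 1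

/-- Mass of a set under `μ`. -/
def setSum {A : Type*} (μ : A → ℝ≥0∞) (S : Set A) : ℝ≥0∞ := ∑' a : S, μ (a : A)

/-- `μ` is a coupling of `(μ₁, μ₂)`: a joint sub-distribution with the given marginals. -/
def IsCoupling {A₁ A₂ : Type*} (μ : A₁ × A₂ → ℝ≥0∞)
    (μ₁ : A₁ → ℝ≥0∞) (μ₂ : A₂ → ℝ≥0∞) : Prop :=
  IsSubDist μ ∧ (∀ a₁, ∑' a₂, μ (a₁, a₂) = μ₁ a₁) ∧ (∀ a₂, ∑' a₁, μ (a₁, a₂) = μ₂ a₂)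

/-- Image of a set under a relation. -/
def relImage {A₁ A₂ : Type*} (R : Set (A₁ × A₂)) (S : Set A₁) : Set A₂ :=
  {a₂ | ∃ a₁ ∈ S, (a₁, a₂) ∈ R}

/-- `R⋆ = R ∪ (A₁ × {⋆}) ∪ ({⋆} × A₂)`, with `⋆` modelled by `none`. -/
def starRel {A₁ A₂ : Type*} (R : Set (A₁ × A₂)) : Set (Option A₁ × Option A₂) :=
  {p | match p with
       | (some a₁, some a₂) => (a₁, a₂) ∈ R
       | (some _, none) => True
       | (none, some _) => True
       | (none, none) => False}

/-- `(ε, δ)`-approximate `R`-lifting of `(μ₁, μ₂)`, witnessed by two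
sub-distributions over `A₁⋆ × A₂⋆` with marginal, support, and ε-distance conditions. -/
def ApproxLift {A₁ A₂ : Type*} (ε δ : ℝ) (R : Set (A₁ × A₂))
    (μ₁ : A₁ → ℝ≥0∞) (μ₂ : A₂ → ℝ≥0∞) : Prop :=
  ∃ μL μR : Option A₁ × Option A₂ → ℝ≥0∞,
    IsSubDist μL ∧ IsSubDist μR ∧
    (∀ a₁, ∑' o, μL (some a₁, o) = μ₁ a₁) ∧ (∀ o, μL (none, o) = 0) ∧
    (∀ a₂, ∑' o, μR (o, some a₂) = μ₂ a₂) ∧ (∀ o, μR (o, none) = 0) ∧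
    {p | μL p ≠ 0} ⊆ starRel R ∧ {p | μR p ≠ 0} ⊆ starRel R ∧
    ∀ S : Set (Option A₁ × Option A₂),
      setSum μL S ≤ ENNReal.ofReal (Real.exp ε) * setSum μR S + ENNReal.ofReal δ


/-- neighborhood of `T` inside `t` under relation `r` -/
def nbr {α β : Type*} (r : α → β → Prop) (t : Finset β) (T : Finset α) : Finset β :=
  t.filter (fun b => ∃ a ∈ T, r a b)

lemma mem_nbr {α β : Type*} {r : α → β → Prop} {t : Finset β} {T : Finset α} {b : β} :
    b ∈ nbr r t T ↔ b ∈ t ∧ ∃ a ∈ T, r a b := Finset.mem_filter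

lemma sum_update_add {ι : Type*} (F : Finset ι) (f : ι → ℝ≥0) (i₀ : ι) (w : ℝ≥0)
    (hi : i₀ ∈ F) (hw : w ≤ f i₀) :
    ∑ i ∈ F, Function.update f i₀ (f i₀ - w) i + w = ∑ i ∈ F, f i := by
  rw [Finset.sum_update_of_mem hi, add_right_comm, tsub_add_cancel_of_le hw, add_comm]
  exact (Finset.sum_eq_sum_sdiff_singleton_add hi f).symm

lemma sum_update_not_mem {ι : Type*} {F : Finset ι} (f : ι → ℝ≥0) {i₀ : ι} (x : ℝ≥0)
    (hi : i₀ ∉ F) :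
    ∑ i ∈ F, Function.update f i₀ x i = ∑ i ∈ F, f i :=
  Finset.sum_congr rfl fun i hmem =>
    Function.update_of_ne (by rintro rfl; exact hi hmem) _ _

theorem strassen_core {α β : Type*} (r : α → β → Prop) :
    ∀ (n : ℕ) (s : Finset α) (t : Finset β) (u : α → ℝ≥0) (v : β → ℝ≥0),
      s.card + t.card ≤ n →
      (∀ T ⊆ s, ∑ a ∈ T, u a ≤ ∑ b ∈ nbr r t T, v b) →
      ∃ γ : α → β → ℝ≥0,
        (∀ a b, γ a b ≠ 0 → r a b ∧ a ∈ s ∧ b ∈ t) ∧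
        (∀ a ∈ s, ∑ b ∈ t, γ a b = u a) ∧
        (∀ b ∈ t, ∑ a ∈ s, γ a b ≤ v b) := by
  intro n
  induction n with
  | zero =>
    intro s t u v hcard hH
    have hs : s = ∅ := Finset.card_eq_zero.mp (by omega)
    exact ⟨0, by simp, by simp [hs], by simp [hs]⟩
  | succ n IH =>
    intro s t u v hcard hH
    by_cases hse : s = ∅
    · exact ⟨0, by simp, by simp [hse], by simp [hse]⟩
    obtain ⟨a₀, ha₀⟩ := Finset.nonempty_iff_ne_empty.mpr hse
    have hscard : 0 < s.card := Finset.card_pos.mpr ⟨a₀, ha₀⟩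
    by_cases h0 : ∃ a ∈ s, u a = 0
    · -- remove a zero-mass source
      obtain ⟨a₁, ha₁, hu1⟩ := h0
      have hcard' : (s.erase a₁).card + t.card ≤ n := by
        rw [Finset.card_erase_of_mem ha₁]; omega
      obtain ⟨γ, hsup, hrow, hcol⟩ := IH (s.erase a₁) t u v hcard'
        (fun T hT => hH T (hT.trans (Finset.erase_subset _ _)))
      refine ⟨γ, fun a b hab => ?_, fun a ha => ?_, fun b hb => ?_⟩
      · obtain ⟨h1, h2, h3⟩ := hsup a b hab
        exact ⟨h1, Finset.mem_of_mem_erase h2, h3⟩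
      · by_cases he : a = a₁
        · subst he; rw [hu1]
          refine Finset.sum_eq_zero fun b hb => ?_
          by_contra hne
          exact Finset.notMem_erase a s (hsup a b hne).2.1
        · exact hrow a (Finset.mem_erase.mpr ⟨he, ha⟩)
      · have heq : ∑ a ∈ s.erase a₁, γ a b = ∑ a ∈ s, γ a b := by
          refine Finset.sum_subset (Finset.erase_subset _ _) fun a ha hna => ?_
          by_contra hne
          exact hna (hsup a b hne).2.1
        rw [← heq]; exact hcol b hb
    push_neg at h0
    have hu0 : u a₀ ≠ 0 := h0 a₀ ha₀
    -- find a partner b₀ for a₀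
    have hsingle := hH {a₀} (Finset.singleton_subset_iff.mpr ha₀)
    rw [Finset.sum_singleton] at hsingle
    have hNne : (nbr r t {a₀}).Nonempty := by
      rcases Finset.eq_empty_or_nonempty (nbr r t {a₀}) with he | hne
      · rw [he, Finset.sum_empty] at hsingle
        exact absurd (le_antisymm hsingle zero_le) hu0
      · exact hne
    obtain ⟨b₀, hb₀mem⟩ := hNne
    have hb₀t : b₀ ∈ t := (mem_nbr.mp hb₀mem).1
    have hrab : r a₀ b₀ := by
      obtain ⟨a, haa, hr⟩ := (mem_nbr.mp hb₀mem).2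
      rwa [Finset.mem_singleton.mp haa] at hr
    -- slack machinery
    set C := s.powerset.filter (fun T => a₀ ∉ T ∧ ∃ a ∈ T, r a b₀) with hCdef
    set slack : Finset α → ℝ≥0 :=
      fun T => (∑ b ∈ nbr r t T, v b) - ∑ a ∈ T, u a with hslackdef
    set c := if hCne : C.Nonempty then C.inf' hCne slack else u a₀ with hcdef
    have hmemC : ∀ T ⊆ s, a₀ ∉ T → b₀ ∈ nbr r t T → T ∈ C := fun T hTs hTa hTb =>
      Finset.mem_filter.mpr ⟨Finset.mem_powerset.mpr hTs, hTa, (mem_nbr.mp hTb).2⟩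
    have hkey : ∀ T ⊆ s, a₀ ∉ T → b₀ ∈ nbr r t T →
        ∑ a ∈ T, u a + c ≤ ∑ b ∈ nbr r t T, v b := by
      intro T hTs hTa hTb
      have hTC : T ∈ C := hmemC T hTs hTa hTb
      have hc1 : c ≤ slack T := by
        rw [hcdef, dif_pos ⟨T, hTC⟩]
        exact Finset.inf'_le _ hTC
      calc ∑ a ∈ T, u a + c ≤ ∑ a ∈ T, u a + slack T := by exact add_le_add_right hc1 _
        _ = ∑ b ∈ nbr r t T, v b := by
            rw [hslackdef]; exact add_tsub_cancel_of_le (hH T hTs)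
    by_cases hB1 : u a₀ ≤ min (v b₀) c
    · -- Case B1 : route all of u a₀ through b₀, remove a₀
      have hwv : u a₀ ≤ v b₀ := hB1.trans (min_le_left _ _)
      have hwc : u a₀ ≤ c := hB1.trans (min_le_right _ _)
      set v' := Function.update v b₀ (v b₀ - u a₀) with hv'def
      have hcard' : (s.erase a₀).card + t.card ≤ n := by
        rw [Finset.card_erase_of_mem ha₀]; omega
      have hH' : ∀ T ⊆ s.erase a₀, ∑ a ∈ T, u a ≤ ∑ b ∈ nbr r t T, v' b := by
        intro T hT
        have hTs : T ⊆ s := hT.trans (Finset.erase_subset _ _)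
        have hTa : a₀ ∉ T := fun h => Finset.notMem_erase a₀ s (hT h)
        by_cases hbN : b₀ ∈ nbr r t T
        · have h1 := hkey T hTs hTa hbN
          have h1' : ∑ a ∈ T, u a + u a₀ ≤ ∑ b ∈ nbr r t T, v b :=
            le_trans (add_le_add_right hwc _) h1
          have h2 : ∑ b ∈ nbr r t T, v' b + u a₀ = ∑ b ∈ nbr r t T, v b :=
            sum_update_add _ v b₀ (u a₀) hbN hwv
          rw [← h2] at h1'
          exact le_of_add_le_add_right h1'
        · have h2 : ∑ b ∈ nbr r t T, v' b = ∑ b ∈ nbr r t T, v b :=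
            Finset.sum_congr rfl fun b hbmem =>
              Function.update_of_ne (by rintro rfl; exact hbN hbmem) _ _
          rw [h2]; exact hH T hTs
      obtain ⟨γ, hsup, hrow, hcol⟩ := IH (s.erase a₀) t u v' hcard' hH'
      refine ⟨fun a b => γ a b + if a = a₀ ∧ b = b₀ then u a₀ else 0, ?_, ?_, ?_⟩
      · intro a b hab
        dsimp only at hab
        by_cases hp : a = a₀ ∧ b = b₀
        · rw [hp.1, hp.2]; exact ⟨hrab, ha₀, hb₀t⟩
        · rw [if_neg hp, add_zero] at hab
          obtain ⟨h1, h2, h3⟩ := hsup a b hab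
          exact ⟨h1, Finset.mem_of_mem_erase h2, h3⟩
      · intro a ha
        rw [Finset.sum_add_distrib]
        by_cases he : a = a₀
        · have h1 : ∑ b ∈ t, γ a b = 0 := Finset.sum_eq_zero fun b hb => by
            by_contra hne
            exact (Finset.mem_erase.mp (hsup a b hne).2.1).1 he
          have h2 : ∑ b ∈ t, (if a = a₀ ∧ b = b₀ then u a₀ else 0) = u a₀ := by
            simp [he, Finset.sum_ite_eq' t b₀ (fun _ => u a₀), hb₀t]
          rw [h1, h2, zero_add, he]
        · have h2 : ∑ b ∈ t, (if a = a₀ ∧ b = b₀ then u a₀ else 0) = 0 :=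
            Finset.sum_eq_zero fun b hb => if_neg (fun h => he h.1)
          rw [h2, add_zero, hrow a (Finset.mem_erase.mpr ⟨he, ha⟩)]
      · intro b hb
        rw [Finset.sum_add_distrib]
        have hγcol : ∑ a ∈ s, γ a b = ∑ a ∈ s.erase a₀, γ a b := by
          refine (Finset.sum_subset (Finset.erase_subset _ _) fun a ha hna => ?_).symm
          by_contra hne
          exact hna (hsup a b hne).2.1
        have hpt : ∑ a ∈ s, (if a = a₀ ∧ b = b₀ then u a₀ else 0)
            = if b = b₀ then u a₀ else 0 := by
          by_cases hbb : b = b₀ <;>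
            simp [hbb, Finset.sum_ite_eq' s a₀ (fun _ => u a₀), ha₀]
        rw [hγcol, hpt]
        by_cases hbb : b = b₀
        · rw [if_pos hbb, hbb]
          have hcb := hcol b₀ hb₀t
          rw [hv'def, Function.update_self] at hcb
          calc ∑ a ∈ s.erase a₀, γ a b₀ + u a₀ ≤ (v b₀ - u a₀) + u a₀ :=
                add_le_add_left hcb _
            _ = v b₀ := tsub_add_cancel_of_le hwv
        · rw [if_neg hbb, add_zero]
          have hcb := hcol b hb
          rwa [hv'def, Function.update_of_ne hbb] at hcb
    · have hminlt : min (v b₀) c < u a₀ := not_le.mp hB1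
      by_cases hB2 : v b₀ ≤ c
      · -- Case B2 : saturate b₀, remove it
        have hvu : v b₀ < u a₀ := by rwa [min_eq_left hB2] at hminlt
        set u' := Function.update u a₀ (u a₀ - v b₀) with hu'def
        have hcard' : s.card + (t.erase b₀).card ≤ n := by
          rw [Finset.card_erase_of_mem hb₀t]
          have : 0 < t.card := Finset.card_pos.mpr ⟨b₀, hb₀t⟩
          omega
        have hNer : ∀ T, nbr r (t.erase b₀) T = (nbr r t T).erase b₀ := by
          intro T
          ext b
          simp only [nbr, Finset.mem_filter, Finset.mem_erase]
          tauto
        have hH' : ∀ T ⊆ s, ∑ a ∈ T, u' a ≤ ∑ b ∈ nbr r (t.erase b₀) T, v b := by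
          intro T hT
          rw [hNer]
          by_cases haT : a₀ ∈ T
          · have hbN : b₀ ∈ nbr r t T := mem_nbr.mpr ⟨hb₀t, a₀, haT, hrab⟩
            have h2 : ∑ a ∈ T, u' a + v b₀ = ∑ a ∈ T, u a :=
              sum_update_add T u a₀ (v b₀) haT hvu.le
            have h3 : ∑ b ∈ (nbr r t T).erase b₀, v b + v b₀ = ∑ b ∈ nbr r t T, v b :=
              Finset.sum_erase_add _ _ hbN
            have h4 : ∑ a ∈ T, u' a + v b₀ ≤ ∑ b ∈ (nbr r t T).erase b₀, v b + v b₀ := by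
              rw [h2, h3]; exact hH T hT
            exact le_of_add_le_add_right h4
          · have hueq : ∑ a ∈ T, u' a = ∑ a ∈ T, u a := sum_update_not_mem u _ haT
            by_cases hbN : b₀ ∈ nbr r t T
            · have h1 := hkey T hT haT hbN
              have h1' : ∑ a ∈ T, u a + v b₀ ≤ ∑ b ∈ nbr r t T, v b :=
                le_trans (add_le_add_right hB2 _) h1
              rw [← Finset.sum_erase_add _ _ hbN] at h1'
              rw [hueq]
              exact le_of_add_le_add_right h1'
            · rw [Finset.erase_eq_of_notMem hbN, hueq]
              exact hH T hT
        obtain ⟨γ, hsup, hrow, hcol⟩ := IH s (t.erase b₀) u' v hcard' hH'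
        refine ⟨fun a b => γ a b + if a = a₀ ∧ b = b₀ then v b₀ else 0, ?_, ?_, ?_⟩
        · intro a b hab
          dsimp only at hab
          by_cases hp : a = a₀ ∧ b = b₀
          · rw [hp.1, hp.2]; exact ⟨hrab, ha₀, hb₀t⟩
          · rw [if_neg hp, add_zero] at hab
            obtain ⟨h1, h2, h3⟩ := hsup a b hab
            exact ⟨h1, h2, Finset.mem_of_mem_erase h3⟩
        · intro a ha
          rw [Finset.sum_add_distrib]
          have hγrow : ∑ b ∈ t, γ a b = ∑ b ∈ t.erase b₀, γ a b := by
            refine (Finset.sum_subset (Finset.erase_subset _ _) fun b hbt hnb => ?_).symm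
            by_contra hne
            exact hnb (hsup a b hne).2.2
          rw [hγrow, hrow a ha]
          by_cases he : a = a₀
          · have h2 : ∑ b ∈ t, (if a = a₀ ∧ b = b₀ then v b₀ else 0) = v b₀ := by
              simp [he, Finset.sum_ite_eq' t b₀ (fun _ => v b₀), hb₀t]
            rw [h2, he, hu'def, Function.update_self]
            exact tsub_add_cancel_of_le hvu.le
          · have h2 : ∑ b ∈ t, (if a = a₀ ∧ b = b₀ then v b₀ else 0) = 0 :=
              Finset.sum_eq_zero fun b hb => if_neg (fun h => he h.1)
            rw [h2, add_zero, hu'def, Function.update_of_ne he]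
        · intro b hb
          rw [Finset.sum_add_distrib]
          have hpt : ∑ a ∈ s, (if a = a₀ ∧ b = b₀ then v b₀ else 0)
              = if b = b₀ then v b₀ else 0 := by
            by_cases hbb : b = b₀ <;>
              simp [hbb, Finset.sum_ite_eq' s a₀ (fun _ => v b₀), ha₀]
          rw [hpt]
          by_cases hbb : b = b₀
          · have hγ0 : ∑ a ∈ s, γ a b = 0 := Finset.sum_eq_zero fun a ha => by
              by_contra hne
              exact (Finset.mem_erase.mp (hsup a b hne).2.2).1 hbb
            rw [hγ0, if_pos hbb, zero_add, hbb]
          · rw [if_neg hbb, add_zero]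
            exact hcol b (Finset.mem_erase.mpr ⟨hbb, hb⟩)
      · -- Case B3 : route c, a tight set appears, split the problem
        have hc1 : c < v b₀ := not_le.mp hB2
        have hc2 : c < u a₀ := by rwa [min_eq_right hc1.le] at hminlt
        have hCne : C.Nonempty := by
          by_contra hne
          rw [hcdef, dif_neg hne] at hc2
          exact lt_irrefl _ hc2
        obtain ⟨T₀, hT₀C, hT₀inf⟩ := Finset.exists_mem_eq_inf' hCne slack
        have hcslack : c = slack T₀ := by rw [hcdef, dif_pos hCne, hT₀inf]
        have hT₀s : T₀ ⊆ s := Finset.mem_powerset.mp (Finset.mem_filter.mp hT₀C).1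
        have hT₀a : a₀ ∉ T₀ := (Finset.mem_filter.mp hT₀C).2.1
        have hT₀ne : T₀.Nonempty := by
          obtain ⟨a, haT, _⟩ := (Finset.mem_filter.mp hT₀C).2.2
          exact ⟨a, haT⟩
        have hb₀N₀ : b₀ ∈ nbr r t T₀ :=
          mem_nbr.mpr ⟨hb₀t, (Finset.mem_filter.mp hT₀C).2.2⟩
        set u' := Function.update u a₀ (u a₀ - c) with hu'def
        set v' := Function.update v b₀ (v b₀ - c) with hv'def
        have hH' : ∀ T ⊆ s, ∑ a ∈ T, u' a ≤ ∑ b ∈ nbr r t T, v' b := by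
          intro T hT
          by_cases haT : a₀ ∈ T
          · have hbN : b₀ ∈ nbr r t T := mem_nbr.mpr ⟨hb₀t, a₀, haT, hrab⟩
            have h2 : ∑ a ∈ T, u' a + c = ∑ a ∈ T, u a :=
              sum_update_add T u a₀ c haT hc2.le
            have h3 : ∑ b ∈ nbr r t T, v' b + c = ∑ b ∈ nbr r t T, v b :=
              sum_update_add _ v b₀ c hbN hc1.le
            have h4 : ∑ a ∈ T, u' a + c ≤ ∑ b ∈ nbr r t T, v' b + c := by
              rw [h2, h3]; exact hH T hT
            exact le_of_add_le_add_right h4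
          · have hueq : ∑ a ∈ T, u' a = ∑ a ∈ T, u a := sum_update_not_mem u _ haT
            by_cases hbN : b₀ ∈ nbr r t T
            · have h1 := hkey T hT haT hbN
              have h3 : ∑ b ∈ nbr r t T, v' b + c = ∑ b ∈ nbr r t T, v b :=
                sum_update_add _ v b₀ c hbN hc1.le
              rw [← h3] at h1
              rw [hueq]
              exact le_of_add_le_add_right h1
            · have hveq : ∑ b ∈ nbr r t T, v' b = ∑ b ∈ nbr r t T, v b :=
                Finset.sum_congr rfl fun b hbmem =>
                  Function.update_of_ne (by rintro rfl; exact hbN hbmem) _ _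
              rw [hueq, hveq]; exact hH T hT
        have htight : ∑ a ∈ T₀, u' a = ∑ b ∈ nbr r t T₀, v' b := by
          have hueq : ∑ a ∈ T₀, u' a = ∑ a ∈ T₀, u a := sum_update_not_mem u _ hT₀a
          have h3 : ∑ b ∈ nbr r t T₀, v' b + c = ∑ b ∈ nbr r t T₀, v b :=
            sum_update_add _ v b₀ c hb₀N₀ hc1.le
          have h4 : ∑ a ∈ T₀, u a + c = ∑ b ∈ nbr r t T₀, v b := by
            rw [hcslack, hslackdef]
            exact add_tsub_cancel_of_le (hH T₀ hT₀s)
          rw [hueq]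
          have h5 : ∑ a ∈ T₀, u a + c = ∑ b ∈ nbr r t T₀, v' b + c := by rw [h3, h4]
          exact add_right_cancel h5
        set t₁ := nbr r t T₀ with ht₁def
        set t₂ := t.filter (fun b => ¬ ∃ a ∈ T₀, r a b) with ht₂def
        have ht₁sub : t₁ ⊆ t := Finset.filter_subset _ _
        have ht₂sub : t₂ ⊆ t := Finset.filter_subset _ _
        have hT₀lt : T₀.card < s.card :=
          Finset.card_lt_card ⟨hT₀s, fun hss => hT₀a (hss ha₀)⟩
        have hcard₁ : T₀.card + t₁.card ≤ n := by
          have := Finset.card_le_card ht₁sub; omega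
        have hH₁ : ∀ T ⊆ T₀, ∑ a ∈ T, u' a ≤ ∑ b ∈ nbr r t₁ T, v' b := by
          intro T hT
          have heq : nbr r t₁ T = nbr r t T := by
            ext b
            rw [mem_nbr, mem_nbr, mem_nbr]
            constructor
            · rintro ⟨⟨hbt, -⟩, hex⟩; exact ⟨hbt, hex⟩
            · rintro ⟨hbt, a, haT, hr⟩
              exact ⟨⟨hbt, a, hT haT, hr⟩, a, haT, hr⟩
          rw [heq]
          exact hH' T (hT.trans hT₀s)
        obtain ⟨γ₁, hsup₁, hrow₁, hcol₁⟩ := IH T₀ t₁ u' v' hcard₁ hH₁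
        have hcard₂ : (s \ T₀).card + t₂.card ≤ n := by
          have h5 := Finset.card_le_card (Finset.sdiff_subset (s := s) (t := T₀))
          have h6 : (s \ T₀).card < s.card := by
            rw [Finset.card_sdiff_of_subset hT₀s]
            have := Finset.card_pos.mpr hT₀ne
            have := Finset.card_le_card hT₀s
            omega
          have := Finset.card_le_card ht₂sub
          omega
        have hH₂ : ∀ T ⊆ s \ T₀, ∑ a ∈ T, u' a ≤ ∑ b ∈ nbr r t₂ T, v' b := by
          intro T hT
          have hTs : T ⊆ s := hT.trans Finset.sdiff_subset
          have hdisj : Disjoint T₀ T := by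
            rw [Finset.disjoint_left]
            intro a haT₀ haT
            exact (Finset.mem_sdiff.mp (hT haT)).2 haT₀
          have hNun : nbr r t (T₀ ∪ T) = t₁ ∪ nbr r t₂ T := by
            ext b
            constructor
            · intro hbmem
              obtain ⟨hbt, a, haU, hr⟩ := mem_nbr.mp hbmem
              rcases Finset.mem_union.mp haU with h | h
              · exact Finset.mem_union_left _ (mem_nbr.mpr ⟨hbt, a, h, hr⟩)
              · by_cases hex : ∃ a' ∈ T₀, r a' b
                · exact Finset.mem_union_left _ (mem_nbr.mpr ⟨hbt, hex⟩)
                · refine Finset.mem_union_right _ (mem_nbr.mpr ⟨?_, a, h, hr⟩)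
                  rw [ht₂def, Finset.mem_filter]
                  exact ⟨hbt, hex⟩
            · intro hbmem
              rcases Finset.mem_union.mp hbmem with hm | hm
              · obtain ⟨hbt, a, haT₀, hr⟩ := mem_nbr.mp hm
                exact mem_nbr.mpr ⟨hbt, a, Finset.mem_union_left _ haT₀, hr⟩
              · obtain ⟨hbt2, a, haT, hr⟩ := mem_nbr.mp hm
                have hbt : b ∈ t := ht₂sub hbt2
                exact mem_nbr.mpr ⟨hbt, a, Finset.mem_union_right _ haT, hr⟩
          have hdisjN : Disjoint t₁ (nbr r t₂ T) := by
            rw [Finset.disjoint_left]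
            intro b hb1 hb2
            have h1 := (mem_nbr.mp hb1).2
            have h2 := Finset.mem_filter.mp ((mem_nbr.mp hb2).1)
            exact h2.2 h1
          have hunion := hH' (T₀ ∪ T) (Finset.union_subset hT₀s hTs)
          rw [Finset.sum_union hdisj, hNun, Finset.sum_union hdisjN, htight] at hunion
          exact le_of_add_le_add_left hunion
        obtain ⟨γ₂, hsup₂, hrow₂, hcol₂⟩ := IH (s \ T₀) t₂ u' v' hcard₂ hH₂
        refine ⟨fun a b => γ₁ a b + γ₂ a b + (if a = a₀ ∧ b = b₀ then c else 0),
          ?_, ?_, ?_⟩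
        · intro a b hab
          dsimp only at hab
          by_cases h1 : γ₁ a b ≠ 0
          · obtain ⟨hr, haa, hbb⟩ := hsup₁ a b h1
            exact ⟨hr, hT₀s haa, ht₁sub hbb⟩
          by_cases h2 : γ₂ a b ≠ 0
          · obtain ⟨hr, haa, hbb⟩ := hsup₂ a b h2
            exact ⟨hr, (Finset.mem_sdiff.mp haa).1, ht₂sub hbb⟩
          push_neg at h1 h2
          rw [h1, h2, zero_add, zero_add] at hab
          by_cases hp : a = a₀ ∧ b = b₀
          · rw [hp.1, hp.2]; exact ⟨hrab, ha₀, hb₀t⟩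
          · rw [if_neg hp] at hab; exact absurd rfl hab
        · intro a ha
          rw [Finset.sum_add_distrib, Finset.sum_add_distrib]
          by_cases haT₀ : a ∈ T₀
          · have hγ₂0 : ∑ b ∈ t, γ₂ a b = 0 := Finset.sum_eq_zero fun b hb => by
              by_contra hne
              exact (Finset.mem_sdiff.mp (hsup₂ a b hne).2.1).2 haT₀
            have hne : a ≠ a₀ := fun h => hT₀a (h ▸ haT₀)
            have hpt : ∑ b ∈ t, (if a = a₀ ∧ b = b₀ then c else 0) = 0 :=
              Finset.sum_eq_zero fun b hb => if_neg (fun h => hne h.1)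
            have hγ₁row : ∑ b ∈ t, γ₁ a b = ∑ b ∈ t₁, γ₁ a b := by
              refine (Finset.sum_subset ht₁sub fun b hbt hnb => ?_).symm
              by_contra hne'
              exact hnb (hsup₁ a b hne').2.2
            rw [hγ₂0, hpt, hγ₁row, add_zero, add_zero, hrow₁ a haT₀, hu'def,
              Function.update_of_ne hne]
          · have haS : a ∈ s \ T₀ := Finset.mem_sdiff.mpr ⟨ha, haT₀⟩
            have hγ₁0 : ∑ b ∈ t, γ₁ a b = 0 := Finset.sum_eq_zero fun b hb => by
              by_contra hne
              exact haT₀ (hsup₁ a b hne).2.1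
            have hγ₂row : ∑ b ∈ t, γ₂ a b = ∑ b ∈ t₂, γ₂ a b := by
              refine (Finset.sum_subset ht₂sub fun b hbt hnb => ?_).symm
              by_contra hne'
              exact hnb (hsup₂ a b hne').2.2
            rw [hγ₁0, hγ₂row, zero_add, hrow₂ a haS]
            by_cases he : a = a₀
            · have hpt : ∑ b ∈ t, (if a = a₀ ∧ b = b₀ then c else 0) = c := by
                simp [he, Finset.sum_ite_eq' t b₀ (fun _ => c), hb₀t]
              rw [hpt, he, hu'def, Function.update_self]
              exact tsub_add_cancel_of_le hc2.le
            · have hpt : ∑ b ∈ t, (if a = a₀ ∧ b = b₀ then c else 0) = 0 :=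
                Finset.sum_eq_zero fun b hb => if_neg (fun h => he h.1)
              rw [hpt, add_zero, hu'def, Function.update_of_ne he]
        · intro b hb
          rw [Finset.sum_add_distrib, Finset.sum_add_distrib]
          have hpt : ∑ a ∈ s, (if a = a₀ ∧ b = b₀ then c else 0)
              = if b = b₀ then c else 0 := by
            by_cases hbb : b = b₀ <;>
              simp [hbb, Finset.sum_ite_eq' s a₀ (fun _ => c), ha₀]
          rw [hpt]
          by_cases hbt₁ : b ∈ t₁
          · have hγ₂0 : ∑ a ∈ s, γ₂ a b = 0 := Finset.sum_eq_zero fun a ha => by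
              by_contra hne
              have h2 := Finset.mem_filter.mp ((hsup₂ a b hne).2.2)
              exact h2.2 (mem_nbr.mp hbt₁).2
            have hγ₁col : ∑ a ∈ s, γ₁ a b = ∑ a ∈ T₀, γ₁ a b := by
              refine (Finset.sum_subset hT₀s fun a ha hna => ?_).symm
              by_contra hne
              exact hna (hsup₁ a b hne).2.1
            rw [hγ₂0, hγ₁col, add_zero]
            have hcb := hcol₁ b hbt₁
            by_cases hbb : b = b₀
            · rw [if_pos hbb, hbb]
              rw [hv'def, hbb, Function.update_self] at hcb
              calc ∑ a ∈ T₀, γ₁ a b₀ + c ≤ (v b₀ - c) + c := add_le_add_left hcb _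
                _ = v b₀ := tsub_add_cancel_of_le hc1.le
            · rw [if_neg hbb, add_zero]
              rwa [hv'def, Function.update_of_ne hbb] at hcb
          · have hbt₂ : b ∈ t₂ := by
              rw [ht₂def, Finset.mem_filter]
              refine ⟨hb, fun hex => hbt₁ (mem_nbr.mpr ⟨hb, hex⟩)⟩
            have hγ₁0 : ∑ a ∈ s, γ₁ a b = 0 := Finset.sum_eq_zero fun a ha => by
              by_contra hne
              exact hbt₁ (hsup₁ a b hne).2.2
            have hγ₂col : ∑ a ∈ s, γ₂ a b = ∑ a ∈ s \ T₀, γ₂ a b := by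
              refine (Finset.sum_subset Finset.sdiff_subset fun a ha hna => ?_).symm
              by_contra hne
              exact hna (hsup₂ a b hne).2.1
            have hbb : b ≠ b₀ := fun h => hbt₁ (h ▸ hb₀N₀)
            rw [hγ₁0, hγ₂col, zero_add, if_neg hbb, add_zero]
            have hcb := hcol₂ b hbt₂
            rwa [hv'def, Function.update_of_ne hbb] at hcb

lemma tsum_option_split {β : Type*} (f : Option β → ℝ≥0∞) :
    ∑' o, f o = f none + ∑' b, f (some b) := by
  calc ∑' o, f o
      = ∑' (o : Option β),
          ((if o = none then f none else 0) + (if o = none then 0 else f o)) :=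
        tsum_congr (by intro o; cases o <;> simp)
    _ = (∑' (o : Option β), if o = none then f none else 0) +
          ∑' (o : Option β), (if o = none then 0 else f o) := ENNReal.tsum_add
    _ = f none + ∑' b, f (some b) := by
        congr 1
        · rw [tsum_eq_single none (fun o ho => if_neg ho), if_pos rfl]
        · refine ((Option.some_injective β).tsum_eq ?_).symm.trans ?_
          · intro o ho
            cases o with
            | none => simp at ho
            | some b => exact Set.mem_range_self b
          · exact tsum_congr fun b => by simp

lemma setSum_eq_finsetSum {A : Type*} (μ : A → ℝ≥0∞) (F : Finset A)
    (hsupp : ∀ a, μ a ≠ 0 → a ∈ F) (X : Set A) :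
    setSum μ X = ∑ a ∈ F.filter (fun a => a ∈ X), μ a := by
  rw [setSum, tsum_subtype]
  rw [tsum_eq_sum (s := F.filter (fun a => a ∈ X)) ?_]
  · exact Finset.sum_congr rfl fun a ha =>
      Set.indicator_of_mem (Finset.mem_filter.mp ha).2 μ
  · intro a ha
    by_cases hx : a ∈ X
    · rw [Set.indicator_of_mem hx]
      by_contra h
      exact ha (Finset.mem_filter.mpr ⟨hsupp a h, hx⟩)
    · exact Set.indicator_of_notMem hx μ

lemma setSum_finset {A : Type*} (μ : A → ℝ≥0∞) (T : Finset A) :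
    setSum μ (↑T : Set A) = ∑ a ∈ T, μ a := by
  rw [setSum]
  exact Finset.tsum_subtype T μ

theorem sato_to_alift_finite {A₁ A₂ : Type*}
    (μ₁ : A₁ → ℝ≥0∞) (μ₂ : A₂ → ℝ≥0∞)
    (h₁ : IsSubDist μ₁) (h₂ : IsSubDist μ₂)
    (hfin₁ : (Function.support μ₁).Finite) (hfin₂ : (Function.support μ₂).Finite)
    (R : Set (A₁ × A₂)) (ε δ : ℝ) (hδ : 0 ≤ δ)
    (h : ∀ S₁ : Set A₁,
      setSum μ₁ S₁ ≤ ENNReal.ofReal (Real.exp ε) * setSum μ₂ (relImage R S₁) +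
        ENNReal.ofReal δ) :
    ApproxLift ε δ R μ₁ μ₂ := by
  classical
  set s : Finset A₁ := hfin₁.toFinset with hsdef
  set t : Finset (Option A₂) := insert none (hfin₂.toFinset.image some) with htdef
  set u : A₁ → ℝ≥0 := fun a => (μ₁ a).toNNReal with hudef
  set v : Option A₂ → ℝ≥0 := fun o => match o with
    | none => δ.toNNReal
    | some a₂ => (ENNReal.ofReal (Real.exp ε) * μ₂ a₂).toNNReal
    with hvdef
  set r : A₁ → Option A₂ → Prop := fun a o => match o with
    | none => True
    | some a₂ => (a, a₂) ∈ R
    with hrdef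
  have hμ₁fin : ∀ a, μ₁ a ≠ ∞ := fun a =>
    ne_top_of_le_ne_top ENNReal.one_ne_top ((ENNReal.le_tsum a).trans h₁)
  have hμ₂fin : ∀ a₂, μ₂ a₂ ≠ ∞ := fun a₂ =>
    ne_top_of_le_ne_top ENNReal.one_ne_top ((ENNReal.le_tsum a₂).trans h₂)
  have hvfin : ∀ a₂, ENNReal.ofReal (Real.exp ε) * μ₂ a₂ ≠ ∞ := fun a₂ =>
    ENNReal.mul_ne_top ENNReal.ofReal_ne_top (hμ₂fin a₂)
  have hcoeu : ∀ a, (u a : ℝ≥0∞) = μ₁ a := fun a => ENNReal.coe_toNNReal (hμ₁fin a)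
  have hcoevs : ∀ a₂, (v (some a₂) : ℝ≥0∞) = ENNReal.ofReal (Real.exp ε) * μ₂ a₂ :=
    fun a₂ => ENNReal.coe_toNNReal (hvfin a₂)
  have hcoevn : ((v none : ℝ≥0) : ℝ≥0∞) = ENNReal.ofReal δ := rfl
  have hsupp₁ : ∀ a, μ₁ a ≠ 0 → a ∈ s := fun a ha => hfin₁.mem_toFinset.mpr ha
  have hsupp₂ : ∀ a₂, μ₂ a₂ ≠ 0 → a₂ ∈ hfin₂.toFinset := fun a ha =>
    hfin₂.mem_toFinset.mpr ha
  have hnone_t : (none : Option A₂) ∈ t := Finset.mem_insert_self _ _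
  have hsome_t : ∀ a₂ : A₂, (some a₂ ∈ t ↔ a₂ ∈ hfin₂.toFinset) := by
    intro a₂; rw [htdef]; simp
  -- the Hall condition for the discrete flow problem
  have hHall : ∀ T ⊆ s, ∑ a ∈ T, u a ≤ ∑ b ∈ nbr r t T, v b := by
    intro T hT
    rcases T.eq_empty_or_nonempty with rfl | hTne
    · simp
    refine ENNReal.coe_le_coe.mp ?_
    rw [ENNReal.coe_finset_sum, ENNReal.coe_finset_sum]
    have hL : ∑ a ∈ T, ((u a : ℝ≥0) : ℝ≥0∞) = setSum μ₁ (↑T : Set A₁) := by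
      rw [setSum_finset]; exact Finset.sum_congr rfl fun a _ => hcoeu a
    have hnbr : nbr r t T
        = insert none ((hfin₂.toFinset.filter
            (fun a₂ => a₂ ∈ relImage R (↑T : Set A₁))).image some) := by
      ext o
      cases o with
      | none =>
        simp only [mem_nbr, Finset.mem_insert]
        obtain ⟨a, haT⟩ := hTne
        constructor
        · intro _; exact Or.inl trivial
        · intro _; exact ⟨hnone_t, a, haT, trivial⟩
      | some a₂ =>
        simp only [mem_nbr, Finset.mem_insert, Finset.mem_image, Finset.mem_filter,
          relImage, Set.mem_setOf_eq, Finset.mem_coe]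
        constructor
        · rintro ⟨hot, a, haT, hrel⟩
          exact Or.inr ⟨a₂, ⟨(hsome_t a₂).mp hot, a, haT, hrel⟩, rfl⟩
        · rintro (hcon | ⟨a₂', ⟨hmem, a, haT, hrel⟩, heq⟩)
          · exact absurd hcon (by simp)
          · obtain rfl : a₂' = a₂ := Option.some_injective _ heq
            exact ⟨(hsome_t _).mpr hmem, a, haT, hrel⟩
    have hnot : (none : Option A₂) ∉ (hfin₂.toFinset.filter
        (fun a₂ => a₂ ∈ relImage R (↑T : Set A₁))).image some := by simp
    have hR : ∑ b ∈ nbr r t T, ((v b : ℝ≥0) : ℝ≥0∞)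
        = ENNReal.ofReal δ
          + ENNReal.ofReal (Real.exp ε) * setSum μ₂ (relImage R (↑T : Set A₁)) := by
      rw [hnbr, Finset.sum_insert hnot, hcoevn,
        Finset.sum_image (fun x _ y _ h => Option.some_injective _ h)]
      congr 1
      rw [setSum_eq_finsetSum μ₂ hfin₂.toFinset hsupp₂, Finset.mul_sum]
      exact Finset.sum_congr rfl fun a₂ _ => hcoevs a₂
    rw [hL, hR]
    calc setSum μ₁ (↑T : Set A₁)
        ≤ ENNReal.ofReal (Real.exp ε) * setSum μ₂ (relImage R (↑T : Set A₁))
            + ENNReal.ofReal δ := h (↑T : Set A₁)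
      _ = _ := add_comm _ _
  obtain ⟨γ, hγsupp, hγrow, hγcol⟩ :=
    strassen_core r (s.card + t.card) s t u v le_rfl hHall
  set g : A₁ → Option A₂ → ℝ≥0∞ := fun a o => ((γ a o : ℝ≥0) : ℝ≥0∞) with hgdef
  have hg0 : ∀ {a o}, g a o ≠ 0 → r a o ∧ a ∈ s ∧ o ∈ t := by
    intro a o hne
    exact hγsupp a o (fun h => hne (by rw [hgdef]; exact_mod_cast congrArg _ h))
  have hgrow : ∀ a, ∑' o, g a o = μ₁ a := by
    intro a
    rw [tsum_eq_sum (s := t) (fun o ho => ?_)]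
    · by_cases ha : a ∈ s
      · calc ∑ o ∈ t, g a o = ((∑ o ∈ t, γ a o : ℝ≥0) : ℝ≥0∞) :=
            (ENNReal.coe_finset_sum _ _).symm
          _ = μ₁ a := by rw [hγrow a ha]; exact hcoeu a
      · have hz : ∑ o ∈ t, g a o = 0 := Finset.sum_eq_zero fun o ho => by
          by_contra hne; exact ha (hg0 hne).2.1
        have hz2 : μ₁ a = 0 := by
          by_contra hne; exact ha (hsupp₁ a hne)
        rw [hz, hz2]
    · by_contra hne; exact ho (hg0 hne).2.2
  set col : A₂ → ℝ≥0∞ := fun a₂ => ∑ a ∈ s, g a (some a₂) with hcoldef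
  have hee1 : ENNReal.ofReal (Real.exp (-ε)) * ENNReal.ofReal (Real.exp ε) = 1 := by
    rw [← ENNReal.ofReal_mul (Real.exp_nonneg _), ← Real.exp_add, neg_add_cancel,
      Real.exp_zero, ENNReal.ofReal_one]
  have hee2 : ENNReal.ofReal (Real.exp ε) * ENNReal.ofReal (Real.exp (-ε)) = 1 := by
    rw [mul_comm]; exact hee1
  have hcolle : ∀ a₂, ENNReal.ofReal (Real.exp (-ε)) * col a₂ ≤ μ₂ a₂ := by
    intro a₂
    by_cases hst : some a₂ ∈ t
    · have h1 : col a₂ ≤ ((v (some a₂) : ℝ≥0) : ℝ≥0∞) := by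
        calc col a₂ = ((∑ a ∈ s, γ a (some a₂) : ℝ≥0) : ℝ≥0∞) :=
            (ENNReal.coe_finset_sum _ _).symm
          _ ≤ _ := ENNReal.coe_le_coe.mpr (hγcol _ hst)
      calc ENNReal.ofReal (Real.exp (-ε)) * col a₂
          ≤ ENNReal.ofReal (Real.exp (-ε))
              * (ENNReal.ofReal (Real.exp ε) * μ₂ a₂) :=
            mul_le_mul_right (h1.trans_eq (hcoevs a₂)) _
        _ = μ₂ a₂ := by rw [← mul_assoc, hee1, one_mul]
    · have hc0 : col a₂ = 0 := Finset.sum_eq_zero fun a ha => by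
        by_contra hne; exact hst (hg0 hne).2.2
      rw [hc0, mul_zero]; exact zero_le
  set μL : Option A₁ × Option A₂ → ℝ≥0∞ := fun p => match p with
    | (some a₁, o) => g a₁ o
    | (none, _) => 0
    with hμLdef
  set μR : Option A₁ × Option A₂ → ℝ≥0∞ := fun p => match p with
    | (some a₁, some a₂) => ENNReal.ofReal (Real.exp (-ε)) * g a₁ (some a₂)
    | (none, some a₂) => μ₂ a₂ - ENNReal.ofReal (Real.exp (-ε)) * col a₂
    | (_, none) => 0
    with hμRdef
  have hμLnone : ∀ o, μL (none, o) = 0 := fun o => rfl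
  have hμRnone : ∀ o, μR (o, none) = 0 := fun o => by cases o <;> rfl
  have hμLmarg : ∀ a₁, ∑' o, μL (some a₁, o) = μ₁ a₁ := fun a₁ =>
    (tsum_congr fun o => rfl).trans (hgrow a₁)
  have hcoltsum : ∀ a₂, ∑' a₁, g a₁ (some a₂) = col a₂ := by
    intro a₂
    exact tsum_eq_sum (fun a ha => by
      by_contra hne; exact ha (hg0 hne).2.1)
  have hμRmarg : ∀ a₂, ∑' o, μR (o, some a₂) = μ₂ a₂ := by
    intro a₂
    rw [tsum_option_split (fun o => μR (o, some a₂))]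
    have h2 : ∑' a₁, μR (some a₁, some a₂)
        = ENNReal.ofReal (Real.exp (-ε)) * col a₂ := by
      calc ∑' a₁, μR (some a₁, some a₂)
          = ∑' a₁, ENNReal.ofReal (Real.exp (-ε)) * g a₁ (some a₂) :=
            tsum_congr fun a₁ => rfl
        _ = ENNReal.ofReal (Real.exp (-ε)) * ∑' a₁, g a₁ (some a₂) :=
            ENNReal.tsum_mul_left
        _ = _ := by rw [hcoltsum a₂]
    rw [h2]
    exact tsub_add_cancel_of_le (hcolle a₂)
  refine ⟨μL, μR, ?_, ?_, hμLmarg, hμLnone, hμRmarg, hμRnone, ?_, ?_, ?_⟩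
  · -- IsSubDist μL
    show ∑' p, μL p ≤ 1
    have h1 : ∑' p, μL p = ∑' (o₁ : Option A₁), ∑' (o₂ : Option A₂), μL (o₁, o₂) :=
      ENNReal.tsum_prod (f := fun o₁ o₂ => μL (o₁, o₂))
    rw [h1, tsum_option_split (fun o₁ => ∑' (o₂ : Option A₂), μL (o₁, o₂))]
    have h2 : ∑' (o₂ : Option A₂), μL (none, o₂) = 0 :=
      (tsum_congr fun o₂ => rfl).trans tsum_zero
    have h3 : ∀ a₁, ∑' (o₂ : Option A₂), μL (some a₁, o₂) = μ₁ a₁ := hμLmarg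
    rw [h2, tsum_congr h3, zero_add]
    exact h₁
  · -- IsSubDist μR
    show ∑' p, μR p ≤ 1
    have h1 : ∑' p, μR p = ∑' (o₁ : Option A₁), ∑' (o₂ : Option A₂), μR (o₁, o₂) :=
      ENNReal.tsum_prod (f := fun o₁ o₂ => μR (o₁, o₂))
    rw [h1, ENNReal.tsum_comm,
      tsum_option_split (fun o₂ => ∑' (o₁ : Option A₁), μR (o₁, o₂))]
    have h2 : ∑' (o₁ : Option A₁), μR (o₁, none) = 0 :=
      (tsum_congr fun o₁ => hμRnone o₁).trans tsum_zero
    rw [h2, tsum_congr hμRmarg, zero_add]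
    exact h₂
  · -- support of μL
    rintro ⟨o₁, o₂⟩ hp
    cases o₁ with
    | none => exact absurd rfl hp
    | some a₁ =>
      cases o₂ with
      | none => trivial
      | some a₂ => exact (hg0 hp).1
  · -- support of μR
    rintro ⟨o₁, o₂⟩ hp
    cases o₁ with
    | none =>
      cases o₂ with
      | none => exact absurd rfl hp
      | some a₂ => trivial
    | some a₁ =>
      cases o₂ with
      | none => exact absurd rfl hp
      | some a₂ =>
        have hgne : g a₁ (some a₂) ≠ 0 := fun h => hp (by
          show ENNReal.ofReal (Real.exp (-ε)) * g a₁ (some a₂) = 0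
          rw [h, mul_zero])
        exact (hg0 hgne).1
  · -- the ε-δ distance condition
    intro S
    set extra : Option A₁ × Option A₂ → ℝ≥0∞ := fun p => match p with
      | (some a₁, none) => g a₁ none
      | _ => 0
      with hexdef
    have hpt : ∀ p, μL p ≤ ENNReal.ofReal (Real.exp ε) * μR p + extra p := by
      rintro ⟨o₁, o₂⟩
      cases o₁ with
      | none => exact zero_le
      | some a₁ =>
        cases o₂ with
        | none =>
          show g a₁ none ≤ ENNReal.ofReal (Real.exp ε) * 0 + g a₁ none
          rw [mul_zero, zero_add]
        | some a₂ =>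
          show g a₁ (some a₂) ≤ ENNReal.ofReal (Real.exp ε)
              * (ENNReal.ofReal (Real.exp (-ε)) * g a₁ (some a₂)) + 0
          rw [← mul_assoc, hee2, one_mul, add_zero]
    have hextra : ∑' (p : S), extra ↑p ≤ ENNReal.ofReal δ := by
      have h1 : ∑' (p : S), extra ↑p ≤ ∑' p, extra p := by
        rw [tsum_subtype]
        exact ENNReal.tsum_le_tsum (fun p => Set.indicator_le_self S extra p)
      refine h1.trans ?_
      rw [tsum_eq_sum
        (s := s.image (fun a => ((some a : Option A₁), (none : Option A₂)))) ?_]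
      · calc ∑ p ∈ s.image (fun a => ((some a : Option A₁), (none : Option A₂))),
              extra p
            = ∑ a ∈ s, extra (some a, none) :=
              Finset.sum_image (fun x _ y _ h =>
                Option.some_injective _ (congrArg Prod.fst h))
          _ = ∑ a ∈ s, g a none := Finset.sum_congr rfl fun a _ => rfl
          _ = ((∑ a ∈ s, γ a none : ℝ≥0) : ℝ≥0∞) := (ENNReal.coe_finset_sum _ _).symm
          _ ≤ ((v none : ℝ≥0) : ℝ≥0∞) := ENNReal.coe_le_coe.mpr (hγcol none hnone_t)
          _ = ENNReal.ofReal δ := hcoevn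
      · rintro ⟨o₁, o₂⟩ hpmem
        cases o₁ with
        | none => cases o₂ with
          | none => rfl
          | some a₂ => rfl
        | some a₁ =>
          cases o₂ with
          | some a₂ => rfl
          | none =>
            show g a₁ none = 0
            by_contra hne
            exact hpmem (Finset.mem_image.mpr ⟨a₁, (hg0 hne).2.1, rfl⟩)
    calc setSum μL S = ∑' (p : S), μL ↑p := rfl
      _ ≤ ∑' (p : S), (ENNReal.ofReal (Real.exp ε) * μR ↑p + extra ↑p) :=
          ENNReal.tsum_le_tsum (fun p => hpt ↑p)
      _ = ENNReal.ofReal (Real.exp ε) * setSum μR S + ∑' (p : S), extra ↑p := by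
          rw [ENNReal.tsum_add, ENNReal.tsum_mul_left]; rfl
      _ ≤ ENNReal.ofReal (Real.exp ε) * setSum μR S + ENNReal.ofReal δ :=
          add_le_add_right hextra _
end
end

section
/- (Up-to-bad approximate coupling.) Let μ₁, μ₂ be sub-distributions over A₁, A₂, P₁ ⊆ A₁ with μ₁(A₁∖P₁) ≤ δ', and R ⊆ A₁ × A₂. If there is an (ε,δ)-approximate lifting of {(a₁,a₂) : a₁ ∈ P₁ → (a₁,a₂) ∈ R} relating μ₁ and μ₂, then there is an (ε, δ+δ')-approximate lifting of R relating μ₁ and μ₂. Symmetrically, if P₂ ⊆ A₂ with μ₂(A₂∖P₂) ≤ δ' and there is an (ε,δ)-approximate lifting of {(a₁,a₂) : a₂ ∈ P₂ → (a₁,a₂) ∈ R}, then there is an (ε, δ + e^ε·δ')-approximate lifting of R. -/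
open scoped ENNReal

noncomputable section

namespace UptobadAux

open Classical

lemma tsum_option' {β : Type*} (f : Option β → ℝ≥0∞) :
    ∑' o, f o = f none + ∑' b, f (some b) := by
  have h1 : ∑' b, f (some b) = ∑' x : Set.range (some : β → Option β), f x :=
    (tsum_range f (Option.some_injective β)).symm
  have h2 : (Set.range (some : β → Option β)) = ({none}ᶜ : Set (Option β)) := by
    ext o; cases o <;> simp
  have h3 : f none = ∑' x : ({none} : Set (Option β)), f x := (tsum_singleton none f).symm
  rw [h1, h2, h3]
  exact (Summable.tsum_add_tsum_compl ENNReal.summable ENNReal.summable).symm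

lemma tsum_ite_pair1 {β γ : Type*} (c : β × γ) (x : ℝ≥0∞) (b : β) :
    ∑' o : γ, (if c = (b, o) then x else 0) = if c.1 = b then x else 0 := by
  rcases c with ⟨c1, c2⟩
  by_cases h : c1 = b
  · subst h
    rw [if_pos rfl]
    calc ∑' o : γ, (if (c1, c2) = (c1, o) then x else 0)
        = ∑' o : γ, (if o = c2 then x else 0) := tsum_congr fun o => by
          by_cases h2 : o = c2
          · simp [h2]
          · have hne : (c1, c2) ≠ (c1, o) := fun hh =>
              h2 (((Prod.mk.injEq _ _ _ _).mp hh).2.symm)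
            rw [if_neg hne, if_neg h2]
      _ = x := tsum_ite_eq c2 (fun _ => x)
  · rw [if_neg h]
    convert tsum_zero with o
    simp [Prod.ext_iff, h]

lemma tsum_ite_pair2 {β γ : Type*} (c : β × γ) (x : ℝ≥0∞) (g : γ) :
    ∑' o : β, (if c = (o, g) then x else 0) = if c.2 = g then x else 0 := by
  rcases c with ⟨c1, c2⟩
  by_cases h : c2 = g
  · subst h
    rw [if_pos rfl]
    calc ∑' o : β, (if (c1, c2) = (o, c2) then x else 0)
        = ∑' o : β, (if o = c1 then x else 0) := tsum_congr fun o => by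
          by_cases h2 : o = c1
          · simp [h2]
          · have hne : (c1, c2) ≠ (o, c2) := fun hh =>
              h2 (((Prod.mk.injEq _ _ _ _).mp hh).1.symm)
            rw [if_neg hne, if_neg h2]
      _ = x := tsum_ite_eq c1 (fun _ => x)
  · rw [if_neg h]
    convert tsum_zero with o
    simp [Prod.ext_iff, h]

/-- Pushforward of a mass function along a map. -/
def push {α β : Type*} (f : α → β) (μ : α → ℝ≥0∞) (b : β) : ℝ≥0∞ :=
  ∑' a, if f a = b then μ a else 0

lemma setSum_eq {A : Type*} (μ : A → ℝ≥0∞) (S : Set A) :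
    setSum μ S = ∑' a, S.indicator μ a := tsum_subtype S μ

lemma setSum_le_of {A : Type*} (μ : A → ℝ≥0∞) {S T : Set A}
    (h : ∀ p ∈ S, μ p ≠ 0 → p ∈ T) : setSum μ S ≤ setSum μ T := by
  rw [setSum_eq, setSum_eq]
  refine ENNReal.tsum_le_tsum fun p => ?_
  by_cases hp : p ∈ S
  · by_cases h0 : μ p = 0
    · simp [Set.indicator_apply, hp, h0]
    · have hT := h p hp h0
      simp [Set.indicator_apply, hp, hT]
  · simp [Set.indicator_apply, hp]

lemma setSum_union_le {A : Type*} (μ : A → ℝ≥0∞) (S T : Set A) :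
    setSum μ (S ∪ T) ≤ setSum μ S + setSum μ T := ENNReal.tsum_union_le μ S T

lemma push_setSum {α β : Type*} (f : α → β) (μ : α → ℝ≥0∞) (S : Set β) :
    setSum (push f μ) S = setSum μ (f ⁻¹' S) := by
  rw [setSum_eq, setSum_eq]
  calc ∑' b, S.indicator (push f μ) b
      = ∑' (b) (a), (if b ∈ S then (if f a = b then μ a else 0) else 0) := by
        refine tsum_congr fun b => ?_
        by_cases hb : b ∈ S <;> simp [Set.indicator_apply, hb, push]
    _ = ∑' (a) (b), (if b ∈ S then (if f a = b then μ a else 0) else 0) := ENNReal.tsum_comm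
    _ = ∑' a, (f ⁻¹' S).indicator μ a := by
        refine tsum_congr fun a => ?_
        calc ∑' b, (if b ∈ S then (if f a = b then μ a else 0) else 0)
            = ∑' b, (if b = f a then (if f a ∈ S then μ a else 0) else 0) := by
              refine tsum_congr fun b => ?_
              by_cases hb : b = f a
              · subst hb; by_cases hs : f a ∈ S <;> simp [hs]
              · have hne : f a ≠ b := fun hh => hb hh.symm
                by_cases hs : b ∈ S <;> simp [hs, hne, hb]
          _ = (if f a ∈ S then μ a else 0) := tsum_ite_eq (f a) _
          _ = (f ⁻¹' S).indicator μ a := by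
              by_cases hs : f a ∈ S <;> simp [Set.indicator_apply, Set.mem_preimage, hs]

lemma push_total {α β : Type*} (f : α → β) (μ : α → ℝ≥0∞) :
    ∑' b, push f μ b = ∑' a, μ a := by
  calc ∑' b, push f μ b
      = ∑' (b) (a), (if f a = b then μ a else 0) := rfl
    _ = ∑' (a) (b), (if f a = b then μ a else 0) := ENNReal.tsum_comm
    _ = ∑' a, μ a := by
        refine tsum_congr fun a => ?_
        calc ∑' b, (if f a = b then μ a else 0)
            = ∑' b, (if b = f a then μ a else 0) := tsum_congr fun b => if_congr eq_comm rfl rfl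
          _ = μ a := tsum_ite_eq (f a) (fun _ => μ a)

lemma push_eq_zero {α β : Type*} (f : α → β) (μ : α → ℝ≥0∞) (p : β)
    (h : ∀ q, f q = p → μ q = 0) : push f μ p = 0 := by
  unfold push
  convert tsum_zero with a
  by_cases hh : f a = p <;> simp [hh, h a]

lemma push_support {α β : Type*} (f : α → β) (μ : α → ℝ≥0∞) (p : β)
    (h : push f μ p ≠ 0) : ∃ q, f q = p ∧ μ q ≠ 0 := by
  by_contra hc
  push_neg at hc
  exact h (push_eq_zero f μ p hc)

lemma push_marg_fst {β γ : Type*} (f : β × γ → β × γ) (hf : ∀ q, (f q).1 = q.1)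
    (μ : β × γ → ℝ≥0∞) (b : β) :
    ∑' c, push f μ (b, c) = ∑' c, μ (b, c) := by
  calc ∑' c, push f μ (b, c)
      = ∑' (c) (q), (if f q = (b, c) then μ q else 0) := by
        unfold push
        exact tsum_congr fun c => tsum_congr fun q => by convert rfl
    _ = ∑' (q) (c), (if f q = (b, c) then μ q else 0) := ENNReal.tsum_comm
    _ = ∑' q, (if q.1 = b then μ q else 0) := by
        refine tsum_congr fun q => ?_
        rw [tsum_ite_pair1 (f q) (μ q) b, hf q]
    _ = ∑' (b') (c), (if b' = b then μ (b', c) else 0) := ENNReal.tsum_prod'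
    _ = ∑' b', (if b' = b then (∑' c, μ (b, c)) else 0) := by
        refine tsum_congr fun b' => ?_
        by_cases h : b' = b
        · subst h; simp
        · simp [h]
    _ = ∑' c, μ (b, c) := tsum_ite_eq b _

lemma push_marg_snd {β γ : Type*} (f : β × γ → β × γ) (hf : ∀ q, (f q).2 = q.2)
    (μ : β × γ → ℝ≥0∞) (g : γ) :
    ∑' c, push f μ (c, g) = ∑' c, μ (c, g) := by
  calc ∑' c, push f μ (c, g)
      = ∑' (c) (q), (if f q = (c, g) then μ q else 0) := by
        unfold push
        exact tsum_congr fun c => tsum_congr fun q => by convert rfl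
    _ = ∑' (q) (c), (if f q = (c, g) then μ q else 0) := ENNReal.tsum_comm
    _ = ∑' q, (if q.2 = g then μ q else 0) := by
        refine tsum_congr fun q => ?_
        rw [tsum_ite_pair2 (f q) (μ q) g, hf q]
    _ = ∑' (b') (c), (if c = g then μ (b', c) else 0) := ENNReal.tsum_prod'
    _ = ∑' (c) (b'), (if c = g then μ (b', c) else 0) := ENNReal.tsum_comm
    _ = ∑' c, (if c = g then (∑' b', μ (b', g)) else 0) := by
        refine tsum_congr fun c => ?_
        by_cases h : c = g
        · subst h; simp
        · simp [h]
    _ = ∑' c, μ (c, g) := tsum_ite_eq g _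

lemma setSum_fst_mem {β γ : Type*} (μ : Option β × Option γ → ℝ≥0∞) (T : Set β) :
    setSum μ {p : Option β × Option γ | ∃ a ∈ T, p.1 = some a}
      = ∑' a, T.indicator (fun a => ∑' o, μ (some a, o)) a := by
  set C := {p : Option β × Option γ | ∃ a ∈ T, p.1 = some a} with hC
  rw [setSum_eq, ENNReal.tsum_prod']
  rw [tsum_option' (fun o₁ => ∑' o₂, C.indicator μ (o₁, o₂))]
  have hnone : ∑' o₂, C.indicator μ ((none : Option β), o₂) = 0 := by
    convert tsum_zero with o₂
    have : ((none : Option β), o₂) ∉ C := by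
      rintro ⟨a, _, h⟩; exact Option.some_ne_none a h.symm
    simp [Set.indicator_apply, this]
  rw [hnone, zero_add]
  refine tsum_congr fun a => ?_
  by_cases hT : a ∈ T
  · have hmem : ∀ o₂ : Option γ, ((some a : Option β), o₂) ∈ C := fun o₂ => ⟨a, hT, rfl⟩
    simp only [Set.indicator_of_mem hT]
    exact tsum_congr fun o₂ => Set.indicator_of_mem (hmem o₂) μ
  · have hmem : ∀ o₂ : Option γ, ((some a : Option β), o₂) ∉ C := by
      rintro o₂ ⟨a', ha', h⟩
      exact hT (by rwa [Option.some_inj.mp h])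
    simp only [Set.indicator_of_notMem hT]
    convert tsum_zero with o₂
    exact Set.indicator_of_notMem (hmem o₂) μ

lemma setSum_snd_mem {β γ : Type*} (μ : Option β × Option γ → ℝ≥0∞) (T : Set γ) :
    setSum μ {p : Option β × Option γ | ∃ a ∈ T, p.2 = some a}
      = ∑' a, T.indicator (fun a => ∑' o, μ (o, some a)) a := by
  set C := {p : Option β × Option γ | ∃ a ∈ T, p.2 = some a} with hC
  rw [setSum_eq, ENNReal.tsum_prod']
  rw [ENNReal.tsum_comm (f := fun o₁ o₂ => C.indicator μ (o₁, o₂))]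
  rw [tsum_option' (fun o₂ => ∑' o₁, C.indicator μ (o₁, o₂))]
  have hnone : ∑' o₁, C.indicator μ (o₁, (none : Option γ)) = 0 := by
    convert tsum_zero with o₁
    have : (o₁, (none : Option γ)) ∉ C := by
      rintro ⟨a, _, h⟩; exact Option.some_ne_none a h.symm
    simp [Set.indicator_apply, this]
  rw [hnone, zero_add]
  refine tsum_congr fun a => ?_
  by_cases hT : a ∈ T
  · have hmem : ∀ o₁ : Option β, (o₁, (some a : Option γ)) ∈ C := fun o₁ => ⟨a, hT, rfl⟩
    simp only [Set.indicator_of_mem hT]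
    exact tsum_congr fun o₁ => Set.indicator_of_mem (hmem o₁) μ
  · have hmem : ∀ o₁ : Option β, (o₁, (some a : Option γ)) ∉ C := by
      rintro o₁ ⟨a', ha', h⟩
      exact hT (by rwa [Option.some_inj.mp h])
    simp only [Set.indicator_of_notMem hT]
    convert tsum_zero with o₁
    exact Set.indicator_of_notMem (hmem o₁) μ

variable {A₁ A₂ : Type*}

/-- Left repair map: bad pairs get sent to `(some a₁, none)`. -/
def gl (R : Set (A₁ × A₂)) : Option A₁ × Option A₂ → Option A₁ × Option A₂
  | (some a₁, some a₂) => if (a₁, a₂) ∈ R then (some a₁, some a₂) else (some a₁, none)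
  | p => p

/-- Right repair map: bad pairs get sent to `(none, some a₂)`. -/
def gr (R : Set (A₁ × A₂)) : Option A₁ × Option A₂ → Option A₁ × Option A₂
  | (some a₁, some a₂) => if (a₁, a₂) ∈ R then (some a₁, some a₂) else (none, some a₂)
  | p => p

lemma gl_fst (R : Set (A₁ × A₂)) (q : Option A₁ × Option A₂) : (gl R q).1 = q.1 := by
  rcases q with ⟨o₁, o₂⟩
  cases o₁ <;> cases o₂ <;> simp only [gl] <;> try rfl
  split <;> rfl

lemma gr_snd (R : Set (A₁ × A₂)) (q : Option A₁ × Option A₂) : (gr R q).2 = q.2 := by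
  rcases q with ⟨o₁, o₂⟩
  cases o₁ <;> cases o₂ <;> simp only [gr] <;> try rfl
  split <;> rfl

/-- The set of bad pairs, viewed inside the option product. -/
def BadSet (R : Set (A₁ × A₂)) : Set (Option A₁ × Option A₂) :=
  {p | ∃ a₁ a₂, p = (some a₁, some a₂) ∧ (a₁, a₂) ∉ R}

lemma gl_eq_gr_of_not_bad (R : Set (A₁ × A₂)) (q : Option A₁ × Option A₂)
    (h : q ∉ BadSet R) : gl R q = gr R q := by
  rcases q with ⟨o₁, o₂⟩
  cases o₁ with
  | none => rfl
  | some a₁ =>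
    cases o₂ with
    | none => rfl
    | some a₂ =>
      have hR : (a₁, a₂) ∈ R := by
        by_contra hnR
        exact h ⟨a₁, a₂, rfl, hnR⟩
      simp only [gl, gr, if_pos hR]

lemma gl_mem_star (R : Set (A₁ × A₂)) (q : Option A₁ × Option A₂)
    (h : q ≠ (none, none)) : gl R q ∈ starRel R := by
  rcases q with ⟨o₁, o₂⟩
  cases o₁ with
  | none =>
    cases o₂ with
    | none => exact absurd rfl h
    | some a₂ => exact trivial
  | some a₁ =>
    cases o₂ with
    | none => exact trivial
    | some a₂ =>
      by_cases hR : (a₁, a₂) ∈ R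
      · simp only [gl, if_pos hR]; exact hR
      · simp only [gl, if_neg hR]; exact trivial

lemma gr_mem_star (R : Set (A₁ × A₂)) (q : Option A₁ × Option A₂)
    (h : q ≠ (none, none)) : gr R q ∈ starRel R := by
  rcases q with ⟨o₁, o₂⟩
  cases o₁ with
  | none =>
    cases o₂ with
    | none => exact absurd rfl h
    | some a₂ => exact trivial
  | some a₁ =>
    cases o₂ with
    | none => exact trivial
    | some a₂ =>
      by_cases hR : (a₁, a₂) ∈ R
      · simp only [gr, if_pos hR]; exact hR
      · simp only [gr, if_neg hR]; exact trivial

end UptobadAux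

open UptobadAux

theorem uptobad_coupling {A₁ A₂ : Type*} [Countable A₁] [Countable A₂]
    (μ₁ : A₁ → ℝ≥0∞) (μ₂ : A₂ → ℝ≥0∞)
    (h₁ : IsSubDist μ₁) (h₂ : IsSubDist μ₂)
    (P₁ : Set A₁) (P₂ : Set A₂) (R : Set (A₁ × A₂)) (ε δ δ' : ℝ)
    (hδ : 0 ≤ δ) (hδ' : 0 ≤ δ') :
    (setSum μ₁ P₁ᶜ ≤ ENNReal.ofReal δ' →
      ApproxLift ε δ {p : A₁ × A₂ | p.1 ∈ P₁ → p ∈ R} μ₁ μ₂ →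
      ApproxLift ε (δ + δ') R μ₁ μ₂) ∧
    (setSum μ₂ P₂ᶜ ≤ ENNReal.ofReal δ' →
      ApproxLift ε δ {p : A₁ × A₂ | p.2 ∈ P₂ → p ∈ R} μ₁ μ₂ →
      ApproxLift ε (δ + Real.exp ε * δ') R μ₁ μ₂) := by
  constructor
  · intro hP hlift
    obtain ⟨μL, μR, hLsub, hRsub, hLm, hLn, hRm, hRn, hLsupp, hRsupp, hdist⟩ := hlift
    refine ⟨push (gl R) μL, push (gr R) μR, ?_, ?_, ?_, ?_, ?_, ?_, ?_, ?_, ?_⟩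
    · unfold IsSubDist; rw [push_total]; exact hLsub
    · unfold IsSubDist; rw [push_total]; exact hRsub
    · intro a₁; rw [push_marg_fst (gl R) (gl_fst R) μL (some a₁)]; exact hLm a₁
    · intro o
      refine push_eq_zero _ _ _ fun q hq => ?_
      rcases q with ⟨o₁, o₂⟩
      have : o₁ = none := by
        have := gl_fst R (o₁, o₂)
        rw [hq] at this
        exact this.symm
      subst this
      exact hLn o₂
    · intro a₂; rw [push_marg_snd (gr R) (gr_snd R) μR (some a₂)]; exact hRm a₂
    · intro o
      refine push_eq_zero _ _ _ fun q hq => ?_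
      rcases q with ⟨o₁, o₂⟩
      have : o₂ = none := by
        have := gr_snd R (o₁, o₂)
        rw [hq] at this
        exact this.symm
      subst this
      exact hRn o₁
    · intro p hp
      obtain ⟨q, hq, hq0⟩ := push_support _ _ _ hp
      have hqn : q ≠ (none, none) := by
        rintro rfl
        exact hq0 (hLn none)
      rw [← hq]
      exact gl_mem_star R q hqn
    · intro p hp
      obtain ⟨q, hq, hq0⟩ := push_support _ _ _ hp
      have hqn : q ≠ (none, none) := by
        rintro rfl
        exact hq0 (hRn none)
      rw [← hq]
      exact gr_mem_star R q hqn
    · intro S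
      rw [push_setSum, push_setSum]
      have hBad : setSum μL (BadSet R) ≤ ENNReal.ofReal δ' := by
        calc setSum μL (BadSet R)
            ≤ setSum μL {p : Option A₁ × Option A₂ | ∃ a ∈ P₁ᶜ, p.1 = some a} := by
              refine setSum_le_of μL fun p hp hne => ?_
              obtain ⟨a₁, a₂, rfl, hnR⟩ := hp
              have hst := hLsupp hne
              have hst' : a₁ ∈ P₁ → (a₁, a₂) ∈ R := hst
              exact ⟨a₁, fun hmem => hnR (hst' hmem), rfl⟩
          _ = ∑' a, P₁ᶜ.indicator (fun a => ∑' o, μL (some a, o)) a := setSum_fst_mem μL P₁ᶜ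
          _ = ∑' a, P₁ᶜ.indicator μ₁ a := by
              refine tsum_congr fun a => ?_
              by_cases h : a ∈ P₁ᶜ
              · rw [Set.indicator_of_mem h, Set.indicator_of_mem h, hLm a]
              · rw [Set.indicator_of_notMem h, Set.indicator_of_notMem h]
          _ = setSum μ₁ P₁ᶜ := (setSum_eq μ₁ P₁ᶜ).symm
          _ ≤ ENNReal.ofReal δ' := hP
      calc setSum μL (gl R ⁻¹' S)
          ≤ setSum μL (gr R ⁻¹' S ∪ BadSet R) := by
            refine setSum_le_of μL fun p hp _ => ?_
            by_cases hb : p ∈ BadSet R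
            · exact Or.inr hb
            · left
              show gr R p ∈ S
              rw [← gl_eq_gr_of_not_bad R p hb]
              exact hp
        _ ≤ setSum μL (gr R ⁻¹' S) + setSum μL (BadSet R) := setSum_union_le μL _ _
        _ ≤ (ENNReal.ofReal (Real.exp ε) * setSum μR (gr R ⁻¹' S) + ENNReal.ofReal δ)
              + ENNReal.ofReal δ' := add_le_add (hdist _) hBad
        _ = ENNReal.ofReal (Real.exp ε) * setSum μR (gr R ⁻¹' S)
              + ENNReal.ofReal (δ + δ') := by
            rw [add_assoc, ENNReal.ofReal_add hδ hδ']
  · intro hP hlift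
    obtain ⟨μL, μR, hLsub, hRsub, hLm, hLn, hRm, hRn, hLsupp, hRsupp, hdist⟩ := hlift
    refine ⟨push (gl R) μL, push (gr R) μR, ?_, ?_, ?_, ?_, ?_, ?_, ?_, ?_, ?_⟩
    · unfold IsSubDist; rw [push_total]; exact hLsub
    · unfold IsSubDist; rw [push_total]; exact hRsub
    · intro a₁; rw [push_marg_fst (gl R) (gl_fst R) μL (some a₁)]; exact hLm a₁
    · intro o
      refine push_eq_zero _ _ _ fun q hq => ?_
      rcases q with ⟨o₁, o₂⟩
      have : o₁ = none := by
        have := gl_fst R (o₁, o₂)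
        rw [hq] at this
        exact this.symm
      subst this
      exact hLn o₂
    · intro a₂; rw [push_marg_snd (gr R) (gr_snd R) μR (some a₂)]; exact hRm a₂
    · intro o
      refine push_eq_zero _ _ _ fun q hq => ?_
      rcases q with ⟨o₁, o₂⟩
      have : o₂ = none := by
        have := gr_snd R (o₁, o₂)
        rw [hq] at this
        exact this.symm
      subst this
      exact hRn o₁
    · intro p hp
      obtain ⟨q, hq, hq0⟩ := push_support _ _ _ hp
      have hqn : q ≠ (none, none) := by
        rintro rfl
        exact hq0 (hLn none)
      rw [← hq]
      exact gl_mem_star R q hqn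
    · intro p hp
      obtain ⟨q, hq, hq0⟩ := push_support _ _ _ hp
      have hqn : q ≠ (none, none) := by
        rintro rfl
        exact hq0 (hRn none)
      rw [← hq]
      exact gr_mem_star R q hqn
    · intro S
      rw [push_setSum, push_setSum]
      have hBad : setSum μR (BadSet R) ≤ ENNReal.ofReal δ' := by
        calc setSum μR (BadSet R)
            ≤ setSum μR {p : Option A₁ × Option A₂ | ∃ a ∈ P₂ᶜ, p.2 = some a} := by
              refine setSum_le_of μR fun p hp hne => ?_
              obtain ⟨a₁, a₂, rfl, hnR⟩ := hp
              have hst := hRsupp hne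
              have hst' : a₂ ∈ P₂ → (a₁, a₂) ∈ R := hst
              exact ⟨a₂, fun hmem => hnR (hst' hmem), rfl⟩
          _ = ∑' a, P₂ᶜ.indicator (fun a => ∑' o, μR (o, some a)) a := setSum_snd_mem μR P₂ᶜ
          _ = ∑' a, P₂ᶜ.indicator μ₂ a := by
              refine tsum_congr fun a => ?_
              by_cases h : a ∈ P₂ᶜ
              · rw [Set.indicator_of_mem h, Set.indicator_of_mem h, hRm a]
              · rw [Set.indicator_of_notMem h, Set.indicator_of_notMem h]
          _ = setSum μ₂ P₂ᶜ := (setSum_eq μ₂ P₂ᶜ).symm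
          _ ≤ ENNReal.ofReal δ' := hP
      have hRmono : setSum μR (gl R ⁻¹' S) ≤ setSum μR (gr R ⁻¹' S) + ENNReal.ofReal δ' := by
        calc setSum μR (gl R ⁻¹' S)
            ≤ setSum μR (gr R ⁻¹' S ∪ BadSet R) := by
              refine setSum_le_of μR fun p hp _ => ?_
              by_cases hb : p ∈ BadSet R
              · exact Or.inr hb
              · left
                show gr R p ∈ S
                rw [← gl_eq_gr_of_not_bad R p hb]
                exact hp
          _ ≤ setSum μR (gr R ⁻¹' S) + setSum μR (BadSet R) := setSum_union_le μR _ _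
          _ ≤ setSum μR (gr R ⁻¹' S) + ENNReal.ofReal δ' := add_le_add le_rfl hBad
      calc setSum μL (gl R ⁻¹' S)
          ≤ ENNReal.ofReal (Real.exp ε) * setSum μR (gl R ⁻¹' S) + ENNReal.ofReal δ :=
            hdist _
        _ ≤ ENNReal.ofReal (Real.exp ε) * (setSum μR (gr R ⁻¹' S) + ENNReal.ofReal δ')
              + ENNReal.ofReal δ := by
            gcongr
        _ = ENNReal.ofReal (Real.exp ε) * setSum μR (gr R ⁻¹' S)
              + ENNReal.ofReal (δ + Real.exp ε * δ') := by
            rw [mul_add, add_assoc, ENNReal.ofReal_add hδ (mul_nonneg (Real.exp_nonneg ε) hδ'),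
              ENNReal.ofReal_mul (Real.exp_nonneg ε), add_comm (ENNReal.ofReal (Real.exp ε) * ENNReal.ofReal δ')]
end
end
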